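/- arXiv:1704.01672 — 3 statements merged into one kernel-verified Lean document; each statement's English description precedes it below -/
import Mathlib

section
/- Let E, A ∈ ℝ^{n×n}, B ∈ ℝ^{n×p}, and suppose M = [E, −B] ∈ ℝ^{n×(n+p)} has full row rank. Let M⁺ be a right inverse of M and N ∈ ℝ^{(n+p)×p} with range N = ker M and NᵀN = I. Define A_d, C_u by (A_d; C_u) = M⁺ A and B_d, D_u by (B_d; D_u) = N, partitioned with A_d, B_d having n rows. Then for all x, x⁺ ∈ ℝⁿ, u ∈ ℝᵖ: E x⁺ = A x + B u holds if and only if there exists s ∈ ℝᵖ with x⁺ = A_d x + B_d s and u = C_u x + D_u s. -/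
theorem descriptor_dv_transition_equiv (n p : ℕ)
    (E A : Matrix (Fin n) (Fin n) ℝ) (B : Matrix (Fin n) (Fin p) ℝ)
    (M : Matrix (Fin n) (Fin n ⊕ Fin p) ℝ) (hMdef : M = Matrix.fromCols E (-B))
    (hrank : M.rank = n)
    (Mp : Matrix (Fin n ⊕ Fin p) (Fin n) ℝ) (hMp : M * Mp = 1)
    (N : Matrix (Fin n ⊕ Fin p) (Fin p) ℝ)
    (hrange : LinearMap.range N.mulVecLin = LinearMap.ker M.mulVecLin)
    (horth : N.transpose * N = 1)
    (Ad : Matrix (Fin n) (Fin n) ℝ) (Cu : Matrix (Fin p) (Fin n) ℝ)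
    (hAdCu : Matrix.fromRows Ad Cu = Mp * A)
    (Bd : Matrix (Fin n) (Fin p) ℝ) (Du : Matrix (Fin p) (Fin p) ℝ)
    (hBdDu : Matrix.fromRows Bd Du = N) :
    ∀ (x xp : Fin n → ℝ) (u : Fin p → ℝ),
      E.mulVec xp = A.mulVec x + B.mulVec u ↔
        ∃ s : Fin p → ℝ,
          xp = Ad.mulVec x + Bd.mulVec s ∧ u = Cu.mulVec x + Du.mulVec s := by
  intro x xp u
  have hMN : ∀ s : Fin p → ℝ, M.mulVec (N.mulVec s) = 0 := by
    intro s
    have : N.mulVec s ∈ LinearMap.range N.mulVecLin := ⟨s, rfl⟩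
    rw [hrange] at this
    exact this
  have hMelim : ∀ (a : Fin n → ℝ) (b : Fin p → ℝ),
      M.mulVec (Sum.elim a b) = E.mulVec a - B.mulVec b := by
    intro a b
    rw [hMdef, Matrix.fromCols_mulVec_sumElim, Matrix.neg_mulVec]
    abel
  constructor
  · intro h
    set w : Fin n ⊕ Fin p → ℝ := Sum.elim xp u with hw
    have hMw : M.mulVec w = A.mulVec x := by
      rw [hMelim, h]; abel
    have hker : w - Mp.mulVec (A.mulVec x) ∈ LinearMap.ker M.mulVecLin := by
      have : M.mulVec (w - Mp.mulVec (A.mulVec x)) = 0 := by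
        rw [Matrix.mulVec_sub, hMw, Matrix.mulVec_mulVec, hMp, Matrix.one_mulVec,
          sub_self]
      exact this
    rw [← hrange] at hker
    obtain ⟨s, hs⟩ := hker
    refine ⟨s, ?_, ?_⟩
    · have := congrFun hs
      have hxp : ∀ i, N.mulVec s (Sum.inl i) = xp i - (Mp * A).mulVec x (Sum.inl i) := by
        intro i
        have h1 := congrFun hs (Sum.inl i)
        simpa [Matrix.mulVec_mulVec, hw] using h1
      funext i
      have h2 := hxp i
      have hB : Bd.mulVec s i = N.mulVec s (Sum.inl i) := by
        rw [← hBdDu, Matrix.fromRows_mulVec]; rfl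
      have hA : Ad.mulVec x i = (Mp * A).mulVec x (Sum.inl i) := by
        rw [← hAdCu, Matrix.fromRows_mulVec]; rfl
      simp only [Pi.add_apply, hB, hA, h2]
      ring
    · funext j
      have h1 := congrFun hs (Sum.inr j)
      have h2 : N.mulVec s (Sum.inr j) = u j - (Mp * A).mulVec x (Sum.inr j) := by
        simpa [Matrix.mulVec_mulVec, hw] using h1
      have hD : Du.mulVec s j = N.mulVec s (Sum.inr j) := by
        rw [← hBdDu, Matrix.fromRows_mulVec]; rfl
      have hC : Cu.mulVec x j = (Mp * A).mulVec x (Sum.inr j) := by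
        rw [← hAdCu, Matrix.fromRows_mulVec]; rfl
      simp only [Pi.add_apply, hD, hC, h2]
      ring
  · rintro ⟨s, hxp, hu⟩
    have hw : Sum.elim xp u = Mp.mulVec (A.mulVec x) + N.mulVec s := by
      funext i
      cases i with
      | inl i =>
        have hA : Ad.mulVec x i = (Mp * A).mulVec x (Sum.inl i) := by
          rw [← hAdCu, Matrix.fromRows_mulVec]; rfl
        have hB : Bd.mulVec s i = N.mulVec s (Sum.inl i) := by
          rw [← hBdDu, Matrix.fromRows_mulVec]; rfl
        simpa [hxp, hA, hB, Matrix.mulVec_mulVec] using rfl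
      | inr j =>
        have hC : Cu.mulVec x j = (Mp * A).mulVec x (Sum.inr j) := by
          rw [← hAdCu, Matrix.fromRows_mulVec]; rfl
        have hD : Du.mulVec s j = N.mulVec s (Sum.inr j) := by
          rw [← hBdDu, Matrix.fromRows_mulVec]; rfl
        simpa [hu, hC, hD, Matrix.mulVec_mulVec] using rfl
    have : M.mulVec (Sum.elim xp u) = A.mulVec x := by
      rw [hw, Matrix.mulVec_add, hMN, Matrix.mulVec_mulVec, hMp, Matrix.one_mulVec,
        add_zero]
    rw [hMelim] at this
    rwa [sub_eq_iff_eq_add] at this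
end

section
/- Under the driving-variable construction (M = [E, −B] full row rank, (A_d; C_u) = M⁺A, (B_d; D_u) = N with range N = ker M, NᵀN = I), the descriptor system and its driving-variable system are bisimilar via the diagonal relation I = {(x, x) | x ∈ ℝⁿ}, where both systems have the same output map C and the same initial set X₀. -/
/-- `R` is a simulation relation from system `(T₁, C₁)` to system `(T₂, C₂)`. -/
def IsSimulation {X₁ X₂ Y : Type*} (T₁ : X₁ → X₁ → Prop) (T₂ : X₂ → X₂ → Prop)
    (C₁ : X₁ → Y) (C₂ : X₂ → Y) (R : X₁ → X₂ → Prop) : Prop :=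
  ∀ x₁ x₂, R x₁ x₂ →
    C₁ x₁ = C₂ x₂ ∧
    ∀ x₁', T₁ x₁ x₁' → ∃ x₂', T₂ x₂ x₂' ∧ R x₁' x₂'

theorem descriptor_dv_bisimilar (n p k : ℕ)
    (E A : Matrix (Fin n) (Fin n) ℝ) (B : Matrix (Fin n) (Fin p) ℝ)
    (C : Matrix (Fin k) (Fin n) ℝ)
    (X₀ : Set (Fin n → ℝ))
    (M : Matrix (Fin n) (Fin n ⊕ Fin p) ℝ) (hMdef : M = Matrix.fromCols E (-B))
    (hrank : M.rank = n)
    (Mp : Matrix (Fin n ⊕ Fin p) (Fin n) ℝ) (hMp : M * Mp = 1)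
    (N : Matrix (Fin n ⊕ Fin p) (Fin p) ℝ)
    (hrange : LinearMap.range N.mulVecLin = LinearMap.ker M.mulVecLin)
    (horth : N.transpose * N = 1)
    (Ad : Matrix (Fin n) (Fin n) ℝ) (Cu : Matrix (Fin p) (Fin n) ℝ)
    (hAdCu : Matrix.fromRows Ad Cu = Mp * A)
    (Bd : Matrix (Fin n) (Fin p) ℝ) (Du : Matrix (Fin p) (Fin p) ℝ)
    (hBdDu : Matrix.fromRows Bd Du = N)
    -- transition relation of the descriptor system
    (TDS : (Fin n → ℝ) → (Fin n → ℝ) → Prop)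
    (hTDS : TDS = fun x xp => ∃ u : Fin p → ℝ,
      E.mulVec xp = A.mulVec x + B.mulVec u)
    -- transition relation of the driving-variable system
    (TDV : (Fin n → ℝ) → (Fin n → ℝ) → Prop)
    (hTDV : TDV = fun x xp => ∃ s : Fin p → ℝ,
      xp = Ad.mulVec x + Bd.mulVec s) :
    IsSimulation TDS TDV C.mulVec C.mulVec (fun x x' => x = x') ∧
    IsSimulation TDV TDS C.mulVec C.mulVec (fun x x' => x = x') ∧
    (∀ x₀ ∈ X₀, ∃ x₀' ∈ X₀, x₀ = x₀') ∧
    (∀ x₀' ∈ X₀, ∃ x₀ ∈ X₀, x₀ = x₀') := by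
  subst hTDS hTDV hMdef
  refine ⟨?_, ?_, fun x hx => ⟨x, hx, rfl⟩, fun x hx => ⟨x, hx, rfl⟩⟩
  · rintro x₁ x₂ rfl
    refine ⟨rfl, ?_⟩
    rintro xp ⟨u, hu⟩
    -- z := (xp, u) satisfies M z = A x
    set Mx := Matrix.fromCols E (-B) with hM
    have hMz : Mx.mulVec (Sum.elim xp u) = A.mulVec x₁ := by
      rw [hM, Matrix.fromCols_mulVec_sumElim, Matrix.neg_mulVec]
      rw [hu]; abel
    have hker : Sum.elim xp u - Mp.mulVec (A.mulVec x₁) ∈ LinearMap.ker Mx.mulVecLin := by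
      simp only [LinearMap.mem_ker, map_sub, Matrix.mulVecLin_apply]
      rw [hMz, Matrix.mulVec_mulVec, hMp, Matrix.one_mulVec, sub_self]
    rw [← hrange] at hker
    obtain ⟨s, hs⟩ := hker
    refine ⟨xp, ⟨s, ?_⟩, rfl⟩
    have hz : Sum.elim xp u = Mp.mulVec (A.mulVec x₁) + N.mulVec s := by
      simp only [Matrix.mulVecLin_apply] at hs
      rw [hs]; abel
    funext i
    have := congrFun hz (Sum.inl i)
    simpa [Matrix.mulVec_mulVec, ← hAdCu, ← hBdDu, Matrix.fromRows_mulVec] using this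
  · rintro x₁ x₂ rfl
    refine ⟨rfl, ?_⟩
    rintro xp ⟨s, hs⟩
    set u := Cu.mulVec x₁ + Du.mulVec s with hu
    refine ⟨xp, ⟨u, ?_⟩, rfl⟩
    have hz : Sum.elim xp u = Mp.mulVec (A.mulVec x₁) + N.mulVec s := by
      funext i
      cases i with
      | inl i => simpa [Matrix.mulVec_mulVec, ← hAdCu, ← hBdDu,
          Matrix.fromRows_mulVec] using congrFun hs i
      | inr i => simp [hu, Matrix.mulVec_mulVec, ← hAdCu, ← hBdDu, Matrix.fromRows_mulVec]
    have hNs : (Matrix.fromCols E (-B)).mulVec (N.mulVec s) = 0 := by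
      have : N.mulVec s ∈ LinearMap.ker (Matrix.fromCols E (-B)).mulVecLin := by
        rw [← hrange]; exact ⟨s, rfl⟩
      simpa [Matrix.mulVecLin_apply] using this
    have key : (Matrix.fromCols E (-B)).mulVec (Sum.elim xp u) = A.mulVec x₁ := by
      rw [hz, Matrix.mulVec_add, hNs, add_zero, Matrix.mulVec_mulVec, hMp,
        Matrix.one_mulVec]
    rw [Matrix.fromCols_mulVec_sumElim, Matrix.neg_mulVec] at key
    rw [← key]; abel
end

section
/- Under the driving-variable construction, the descriptor system and its driving-variable system have equal full behaviour: a triple of sequences (u, x, y) : ℕ → ℝᵖ × ℝⁿ × ℝᵏ with x(0) ∈ X₀ satisfies E x(t+1) = A x(t) + B u(t) and y(t) = C x(t) for all t, if and only if there exists s : ℕ → ℝᵖ such that x(t+1) = A_d x(t) + B_d s(t), u(t) = C_u x(t) + D_u s(t), y(t) = C x(t) for all t and x(0) ∈ X₀. -/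
theorem descriptor_dv_equal_behaviour (n p k : ℕ)
    (E A : Matrix (Fin n) (Fin n) ℝ) (B : Matrix (Fin n) (Fin p) ℝ)
    (C : Matrix (Fin k) (Fin n) ℝ)
    (X₀ : Set (Fin n → ℝ))
    (M : Matrix (Fin n) (Fin n ⊕ Fin p) ℝ) (hMdef : M = Matrix.fromCols E (-B))
    (hrank : M.rank = n)
    (Mp : Matrix (Fin n ⊕ Fin p) (Fin n) ℝ) (hMp : M * Mp = 1)
    (N : Matrix (Fin n ⊕ Fin p) (Fin p) ℝ)
    (hrange : LinearMap.range N.mulVecLin = LinearMap.ker M.mulVecLin)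
    (horth : N.transpose * N = 1)
    (Ad : Matrix (Fin n) (Fin n) ℝ) (Cu : Matrix (Fin p) (Fin n) ℝ)
    (hAdCu : Matrix.fromRows Ad Cu = Mp * A)
    (Bd : Matrix (Fin n) (Fin p) ℝ) (Du : Matrix (Fin p) (Fin p) ℝ)
    (hBdDu : Matrix.fromRows Bd Du = N) :
    ∀ (u : ℕ → Fin p → ℝ) (x : ℕ → Fin n → ℝ) (y : ℕ → Fin k → ℝ),
      (x 0 ∈ X₀ ∧ ∀ t, E.mulVec (x (t + 1)) = A.mulVec (x t) + B.mulVec (u t) ∧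
          y t = C.mulVec (x t)) ↔
        (x 0 ∈ X₀ ∧ ∃ s : ℕ → Fin p → ℝ, ∀ t,
          x (t + 1) = Ad.mulVec (x t) + Bd.mulVec (s t) ∧
          u t = Cu.mulVec (x t) + Du.mulVec (s t) ∧
          y t = C.mulVec (x t)) := by
  intro u x y
  have hAd : ∀ (v : Fin n → ℝ) i, (Mp * A).mulVec v (Sum.inl i) = Ad.mulVec v i := by
    intro v i; rw [← hAdCu, Matrix.fromRows_mulVec]; rfl
  have hCu : ∀ (v : Fin n → ℝ) i, (Mp * A).mulVec v (Sum.inr i) = Cu.mulVec v i := by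
    intro v i; rw [← hAdCu, Matrix.fromRows_mulVec]; rfl
  have hBd : ∀ (v : Fin p → ℝ) i, N.mulVec v (Sum.inl i) = Bd.mulVec v i := by
    intro v i; rw [← hBdDu, Matrix.fromRows_mulVec]; rfl
  have hDu : ∀ (v : Fin p → ℝ) i, N.mulVec v (Sum.inr i) = Du.mulVec v i := by
    intro v i; rw [← hBdDu, Matrix.fromRows_mulVec]; rfl
  have hMMpA : ∀ v : Fin n → ℝ, M.mulVec ((Mp * A).mulVec v) = A.mulVec v := by
    intro v
    rw [Matrix.mulVec_mulVec, ← Matrix.mul_assoc, hMp, Matrix.one_mul]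
  have hMN : ∀ v : Fin p → ℝ, M.mulVec (N.mulVec v) = 0 := by
    intro v
    have h1 : N.mulVec v ∈ LinearMap.range N.mulVecLin := ⟨v, rfl⟩
    rw [hrange] at h1
    exact h1
  constructor
  · rintro ⟨h0, h⟩
    refine ⟨h0, ?_⟩
    have key : ∀ t, ∃ c : Fin p → ℝ,
        Sum.elim (x (t + 1)) (u t) = (Mp * A).mulVec (x t) + N.mulVec c := by
      intro t
      have hM : M.mulVec (Sum.elim (x (t + 1)) (u t) - (Mp * A).mulVec (x t)) = 0 := by
        rw [Matrix.mulVec_sub, hMMpA, hMdef, Matrix.fromCols_mulVec_sumElim,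
          Matrix.neg_mulVec, (h t).1]
        abel
      have hmem : Sum.elim (x (t + 1)) (u t) - (Mp * A).mulVec (x t) ∈
          LinearMap.range N.mulVecLin := by
        rw [hrange]; exact hM
      obtain ⟨c, hc⟩ := hmem
      exact ⟨c, by rw [show N.mulVec c = N.mulVecLin c from rfl, hc]; abel⟩
    choose s hs using key
    refine ⟨s, fun t => ⟨?_, ?_, (h t).2⟩⟩
    · funext i
      have := congrFun (hs t) (Sum.inl i)
      simpa [hAd (x t) i, hBd (s t) i] using this
    · funext i
      have := congrFun (hs t) (Sum.inr i)
      simpa [hCu (x t) i, hDu (s t) i] using this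
  · rintro ⟨h0, s, h⟩
    refine ⟨h0, fun t => ⟨?_, (h t).2.2⟩⟩
    have hv : Sum.elim (x (t + 1)) (u t) = (Mp * A).mulVec (x t) + N.mulVec (s t) := by
      funext j
      cases j with
      | inl i =>
        have := congrFun ((h t).1) i
        simpa [hAd (x t) i, hBd (s t) i] using this
      | inr i =>
        have := congrFun ((h t).2.1) i
        simpa [hCu (x t) i, hDu (s t) i] using this
    have heq := congrArg M.mulVec hv
    rw [Matrix.mulVec_add, hMMpA, hMN, add_zero] at heq
    rw [hMdef, Matrix.fromCols_mulVec_sumElim, Matrix.neg_mulVec] at heq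
    have : E.mulVec (x (t + 1)) - B.mulVec (u t) = A.mulVec (x t) := by
      rw [sub_eq_add_neg]; exact heq
    exact sub_eq_iff_eq_add.mp this
end
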